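/- Sign coherence in rank 2: for the quiver with two vertices and b arrows from 1 to 2 (b ≥ 1), every c-vector obtained by iterated mutation from the initial seed is a nonzero integer vector whose entries are either both nonnegative or both nonpositive. -/
import Mathlib


/-!
Sign coherence of c-vectors in rank 2: for the quiver with two vertices and `b ≥ 1`
arrows from `1` to `2`, i.e. the exchange matrix `B₀ = [[0, b], [-b, 0]]`, every
c-vector (column of a reachable `C`-matrix, where `C`-matrices are obtained from the
identity matrix by the Fomin–Zelevinsky mutation recurrence) is a nonzero integer vector
whose entries are either both nonnegative or both nonpositive.
-/

/-- Positive part `[x]₊ = max(x, 0)`. -/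
def bp (x : ℤ) : ℤ := max x 0

/-- Fomin–Zelevinsky mutation of the exchange matrix `B` at the vertex `v`. -/
def mutB {n : ℕ} (B : Matrix (Fin n) (Fin n) ℤ) (v : Fin n) :
    Matrix (Fin n) (Fin n) ℤ := fun i j =>
  if i = v ∨ j = v then -B i j
  else B i j + bp (B i v) * bp (B v j) - bp (-B i v) * bp (-B v j)

/-- Mutation of the `C`-matrix (c-vector recurrence) at the vertex `v`, for the current
exchange matrix `B`. -/
def mutC {n : ℕ} (B C : Matrix (Fin n) (Fin n) ℤ) (v : Fin n) :
    Matrix (Fin n) (Fin n) ℤ := fun i j =>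
  if j = v then -C i j
  else C i j + C i v * bp (B v j) + bp (-C i v) * B v j

/-- Simultaneous mutation of the pair `(B, C)`. -/
def mutPair {n : ℕ} (p : Matrix (Fin n) (Fin n) ℤ × Matrix (Fin n) (Fin n) ℤ)
    (v : Fin n) : Matrix (Fin n) (Fin n) ℤ × Matrix (Fin n) (Fin n) ℤ :=
  (mutB p.1 v, mutC p.1 p.2 v)

/-- The pair `(B, C)` obtained from the initial seed `(B₀, Id)` by the sequence of
mutations `l`. -/
def mutSeq {n : ℕ} (B₀ : Matrix (Fin n) (Fin n) ℤ) (l : List (Fin n)) :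
    Matrix (Fin n) (Fin n) ℤ × Matrix (Fin n) (Fin n) ℤ :=
  l.foldl mutPair (B₀, 1)

/-- `v` is a c-vector of the cluster algebra with initial exchange matrix `B₀`: a column
of a `C`-matrix reachable from the initial seed by mutations. -/
def IsCVector {n : ℕ} (B₀ : Matrix (Fin n) (Fin n) ℤ) (v : Fin n → ℤ) : Prop :=
  ∃ (l : List (Fin n)) (j : Fin n), v = fun i => (mutSeq B₀ l).2 i j

namespace SC

def u (b : ℤ) : ℕ → ℤ
  | 0 => -1
  | 1 => 0
  | (n+2) => b * u b (n+1) - u b n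

lemma hu (b : ℤ) (n : ℕ) : u b (n+2) = b * u b (n+1) - u b n := rfl

variable {b : ℤ}

lemma u_step (hb : 2 ≤ b) : ∀ n, 0 ≤ u b (n+1) ∧ u b (n+1) ≤ u b (n+2) := by
  intro n
  induction n with
  | zero => norm_num [u]
  | succ n ih =>
    obtain ⟨h0, h1⟩ := ih
    refine ⟨by linarith, ?_⟩
    rw [hu b (n+1)]
    nlinarith

lemma u_nonneg (hb : 2 ≤ b) (n : ℕ) : 0 ≤ u b (n+1) := (u_step hb n).1

lemma u_pos (hb : 2 ≤ b) : ∀ n, 1 ≤ u b (n+2) := by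
  intro n
  induction n with
  | zero => norm_num [u]
  | succ n ih => have := (u_step hb (n+1)).2; linarith

lemma bp_nn {x : ℤ} (h : 0 ≤ x) : bp x = x := max_eq_left h
lemma bp_np {x : ℤ} (h : x ≤ 0) : bp x = 0 := max_eq_right h

abbrev MM := Matrix (Fin 2) (Fin 2) ℤ

def st1 (b : ℤ) (k : ℕ) : MM × MM :=
  (!![0,b;-b,0], !![u b (k+2), -u b (k+1); u b (k+1), -u b k])
def st2 (b : ℤ) (k : ℕ) : MM × MM :=
  (!![0,-b;b,0], !![-u b (k+1), u b (k+2); -u b k, u b (k+1)])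
def st3 (b : ℤ) (k : ℕ) : MM × MM :=
  (!![0,b;-b,0], !![u b (k+1), -u b (k+2); u b (k+2), -u b (k+3)])
def st4 (b : ℤ) (k : ℕ) : MM × MM :=
  (!![0,-b;b,0], !![-u b (k+1), u b k; -u b (k+2), u b (k+1)])
def e0 (b : ℤ) : MM × MM := (!![0,-b;b,0], !![(1:ℤ),0;0,-1])
def e1 (b : ℤ) : MM × MM := (!![0,b;-b,0], !![(0:ℤ),1;-1,0])
def e2 (b : ℤ) : MM × MM := (!![0,b;-b,0], !![(-1:ℤ),0;0,-1])

lemma mB (hb : 0 ≤ b) (v : Fin 2) : mutB !![0,b;-b,0] v = !![0,-b;b,0] := by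
  funext i j
  fin_cases v <;> fin_cases i <;> fin_cases j <;>
    simp [mutB, bp_nn hb, bp_np (by linarith : -b ≤ 0), bp_np (le_refl (0:ℤ))]

lemma mB' (hb : 0 ≤ b) (v : Fin 2) : mutB !![0,-b;b,0] v = !![0,b;-b,0] := by
  funext i j
  fin_cases v <;> fin_cases i <;> fin_cases j <;>
    simp [mutB, bp_nn hb, bp_np (by linarith : -b ≤ 0), bp_np (le_refl (0:ℤ))]

lemma m10 (hb : 2 ≤ b) (k : ℕ) : mutPair (st1 b k) 0 = st2 b (k+1) := by
  have h1 := u_nonneg hb k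
  have h2 := u_nonneg hb (k+1)
  have hb0 : (0:ℤ) ≤ b := by linarith
  rw [Prod.ext_iff]
  refine ⟨mB hb0 0, ?_⟩
  funext i j
  fin_cases i <;> fin_cases j <;>
    simp [mutPair, mutC, st1, st2, bp_nn h1, bp_nn h2,
      bp_np (by linarith : -u b (k+1) ≤ 0), bp_np (by linarith : -u b (k+2) ≤ 0),
      bp_nn hb0] <;> simp [hu] <;> ring

lemma m11 (hb : 2 ≤ b) (k : ℕ) : mutPair (st1 b (k+1)) 1 = st2 b k := by
  have h1 := u_nonneg hb k
  have h2 := u_nonneg hb (k+1)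
  have h3 := u_nonneg hb (k+2)
  have hb0 : (0:ℤ) ≤ b := by linarith
  rw [Prod.ext_iff]
  refine ⟨mB hb0 1, ?_⟩
  funext i j
  fin_cases i <;> fin_cases j <;>
    simp [mutPair, mutC, st1, st2, bp_nn h1, bp_nn h2, bp_nn h3,
      bp_np (by linarith : -u b (k+1) ≤ 0), bp_np (by linarith : -u b (k+2) ≤ 0),
      bp_np (by linarith : -u b (k+3) ≤ 0),
      bp_nn hb0, bp_np (by linarith : -b ≤ 0)] <;> simp [hu] <;> ring

lemma m110 (hb : 2 ≤ b) : mutPair (st1 b 0) 1 = e0 b := by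
  have hb0 : (0:ℤ) ≤ b := by linarith
  rw [Prod.ext_iff]
  refine ⟨mB hb0 1, ?_⟩
  funext i j
  fin_cases i <;> fin_cases j <;>
    simp [mutPair, mutC, st1, e0, u, bp_nn hb0, bp_np (by linarith : -b ≤ 0), bp] <;> omega

lemma m20 (hb : 2 ≤ b) (k : ℕ) : mutPair (st2 b (k+1)) 0 = st1 b k := by
  have h1 := u_nonneg hb k
  have h2 := u_nonneg hb (k+1)
  have h3 := u_nonneg hb (k+2)
  have hb0 : (0:ℤ) ≤ b := by linarith
  rw [Prod.ext_iff]
  refine ⟨mB' hb0 0, ?_⟩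
  funext i j
  fin_cases i <;> fin_cases j <;>
    simp [mutPair, mutC, st1, st2, bp_nn h1, bp_nn h2, bp_nn h3,
      bp_np (by linarith : -u b (k+1) ≤ 0), bp_np (by linarith : -u b (k+2) ≤ 0),
      bp_np (by linarith : -u b (k+3) ≤ 0),
      bp_nn hb0, bp_np (by linarith : -b ≤ 0)] <;> simp [hu] <;> ring

lemma m200 (hb : 2 ≤ b) : mutPair (st2 b 0) 0 = e1 b := by
  have hb0 : (0:ℤ) ≤ b := by linarith
  rw [Prod.ext_iff]
  refine ⟨mB' hb0 0, ?_⟩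
  funext i j
  fin_cases i <;> fin_cases j <;>
    simp [mutPair, mutC, st2, e1, u, bp_nn hb0, bp_np (by linarith : -b ≤ 0), bp] <;> omega

lemma m21 (hb : 2 ≤ b) (k : ℕ) : mutPair (st2 b k) 1 = st1 b (k+1) := by
  have h1 := u_nonneg hb k
  have h2 := u_nonneg hb (k+1)
  have hb0 : (0:ℤ) ≤ b := by linarith
  rw [Prod.ext_iff]
  refine ⟨mB' hb0 1, ?_⟩
  funext i j
  fin_cases i <;> fin_cases j <;>
    simp [mutPair, mutC, st1, st2, bp_nn h1, bp_nn h2,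
      bp_np (by linarith : -u b (k+1) ≤ 0), bp_np (by linarith : -u b (k+2) ≤ 0),
      bp_nn hb0, bp_np (by linarith : -b ≤ 0)] <;> simp [hu] <;> ring

lemma m30 (hb : 2 ≤ b) (k : ℕ) : mutPair (st3 b k) 0 = st4 b k := by
  have h1 := u_nonneg hb k
  have h2 := u_nonneg hb (k+1)
  have h3 := u_nonneg hb (k+2)
  have hb0 : (0:ℤ) ≤ b := by linarith
  rw [Prod.ext_iff]
  refine ⟨mB hb0 0, ?_⟩
  funext i j
  fin_cases i <;> fin_cases j <;>
    simp [mutPair, mutC, st3, st4, bp_nn h1, bp_nn h2, bp_nn h3,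
      bp_np (by linarith : -u b (k+1) ≤ 0), bp_np (by linarith : -u b (k+2) ≤ 0),
      bp_np (by linarith : -u b (k+3) ≤ 0),
      bp_nn hb0, bp_np (by linarith : -b ≤ 0)] <;> simp [hu] <;> ring

lemma m31 (hb : 2 ≤ b) (k : ℕ) : mutPair (st3 b k) 1 = st4 b (k+2) := by
  have h1 := u_nonneg hb k
  have h2 := u_nonneg hb (k+1)
  have h3 := u_nonneg hb (k+2)
  have h4 := u_nonneg hb (k+3)
  have hb0 : (0:ℤ) ≤ b := by linarith
  rw [Prod.ext_iff]
  refine ⟨mB hb0 1, ?_⟩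
  funext i j
  fin_cases i <;> fin_cases j <;>
    simp [mutPair, mutC, st3, st4, bp_nn h1, bp_nn h2, bp_nn h3, bp_nn h4,
      bp_np (by linarith : -u b (k+1) ≤ 0), bp_np (by linarith : -u b (k+2) ≤ 0),
      bp_np (by linarith : -u b (k+3) ≤ 0), bp_np (by linarith : -u b (k+4) ≤ 0),
      bp_nn hb0, bp_np (by linarith : -b ≤ 0)] <;> simp [hu] <;> ring

lemma m40 (hb : 2 ≤ b) (k : ℕ) : mutPair (st4 b k) 0 = st3 b k := by
  have h1 := u_nonneg hb k
  have h2 := u_nonneg hb (k+1)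
  have h3 := u_nonneg hb (k+2)
  have hb0 : (0:ℤ) ≤ b := by linarith
  rw [Prod.ext_iff]
  refine ⟨mB' hb0 0, ?_⟩
  funext i j
  fin_cases i <;> fin_cases j <;>
    simp [mutPair, mutC, st3, st4, bp_nn h1, bp_nn h2, bp_nn h3,
      bp_np (by linarith : -u b (k+1) ≤ 0), bp_np (by linarith : -u b (k+2) ≤ 0),
      bp_np (by linarith : -u b (k+3) ≤ 0),
      bp_nn hb0, bp_np (by linarith : -b ≤ 0)] <;> simp [hu] <;> ring

lemma m41 (hb : 2 ≤ b) (k : ℕ) : mutPair (st4 b (k+2)) 1 = st3 b k := by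
  have h1 := u_nonneg hb k
  have h2 := u_nonneg hb (k+1)
  have h3 := u_nonneg hb (k+2)
  have h4 := u_nonneg hb (k+3)
  have hb0 : (0:ℤ) ≤ b := by linarith
  rw [Prod.ext_iff]
  refine ⟨mB' hb0 1, ?_⟩
  funext i j
  fin_cases i <;> fin_cases j <;>
    simp [mutPair, mutC, st3, st4, bp_nn h1, bp_nn h2, bp_nn h3, bp_nn h4,
      bp_np (by linarith : -u b (k+1) ≤ 0), bp_np (by linarith : -u b (k+2) ≤ 0),
      bp_np (by linarith : -u b (k+3) ≤ 0), bp_np (by linarith : -u b (k+4) ≤ 0),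
      bp_nn hb0, bp_np (by linarith : -b ≤ 0)] <;> simp [hu] <;> ring

lemma m410 (hb : 2 ≤ b) : mutPair (st4 b 0) 1 = e1 b := by
  have hb0 : (0:ℤ) ≤ b := by linarith
  rw [Prod.ext_iff]
  refine ⟨mB' hb0 1, ?_⟩
  funext i j
  fin_cases i <;> fin_cases j <;>
    simp [mutPair, mutC, st4, e1, u, bp_nn hb0, bp_np (by linarith : -b ≤ 0), bp] <;> omega

lemma m411 (hb : 2 ≤ b) : mutPair (st4 b 1) 1 = e2 b := by
  have hb0 : (0:ℤ) ≤ b := by linarith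
  rw [Prod.ext_iff]
  refine ⟨mB' hb0 1, ?_⟩
  funext i j
  fin_cases i <;> fin_cases j <;>
    simp [mutPair, mutC, st4, e2, u, bp_nn hb0, bp_np (by linarith : -b ≤ 0), bp] <;> omega

lemma me00 (hb : 2 ≤ b) : mutPair (e0 b) 0 = e2 b := by
  have hb0 : (0:ℤ) ≤ b := by linarith
  rw [Prod.ext_iff]
  refine ⟨mB' hb0 0, ?_⟩
  funext i j
  fin_cases i <;> fin_cases j <;>
    simp [mutPair, mutC, e0, e2, bp_nn hb0, bp_np (by linarith : -b ≤ 0), bp] <;> omega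

lemma me01 (hb : 2 ≤ b) : mutPair (e0 b) 1 = st1 b 0 := by
  have hb0 : (0:ℤ) ≤ b := by linarith
  rw [Prod.ext_iff]
  refine ⟨mB' hb0 1, ?_⟩
  funext i j
  fin_cases i <;> fin_cases j <;>
    simp [mutPair, mutC, e0, st1, u, bp_nn hb0, bp_np (by linarith : -b ≤ 0), bp] <;> omega

lemma me10 (hb : 2 ≤ b) : mutPair (e1 b) 0 = st2 b 0 := by
  have hb0 : (0:ℤ) ≤ b := by linarith
  rw [Prod.ext_iff]
  refine ⟨mB hb0 0, ?_⟩
  funext i j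
  fin_cases i <;> fin_cases j <;>
    simp [mutPair, mutC, e1, st2, u, bp_nn hb0, bp_np (by linarith : -b ≤ 0), bp] <;> omega

lemma me11 (hb : 2 ≤ b) : mutPair (e1 b) 1 = st4 b 0 := by
  have hb0 : (0:ℤ) ≤ b := by linarith
  rw [Prod.ext_iff]
  refine ⟨mB hb0 1, ?_⟩
  funext i j
  fin_cases i <;> fin_cases j <;>
    simp [mutPair, mutC, e1, st4, u, bp_nn hb0, bp_np (by linarith : -b ≤ 0), bp] <;> omega

lemma me20 (hb : 2 ≤ b) : mutPair (e2 b) 0 = e0 b := by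
  have hb0 : (0:ℤ) ≤ b := by linarith
  rw [Prod.ext_iff]
  refine ⟨mB hb0 0, ?_⟩
  funext i j
  fin_cases i <;> fin_cases j <;>
    simp [mutPair, mutC, e2, e0, bp_nn hb0, bp_np (by linarith : -b ≤ 0), bp] <;> omega

lemma me21 (hb : 2 ≤ b) : mutPair (e2 b) 1 = st4 b 1 := by
  have hb0 : (0:ℤ) ≤ b := by linarith
  rw [Prod.ext_iff]
  refine ⟨mB hb0 1, ?_⟩
  funext i j
  fin_cases i <;> fin_cases j <;>
    simp [mutPair, mutC, e2, st4, u, bp_nn hb0, bp_np (by linarith : -b ≤ 0), bp] <;> omega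

end SC
namespace SC
variable {b : ℤ}

def Inv (b : ℤ) (p : MM × MM) : Prop :=
  (∃ k, p = st1 b k ∨ p = st2 b k ∨ p = st3 b k ∨ p = st4 b k) ∨
    p = e0 b ∨ p = e1 b ∨ p = e2 b

lemma inv_step (hb : 2 ≤ b) (p : MM × MM) (v : Fin 2) (h : Inv b p) :
    Inv b (mutPair p v) := by
  rcases h with ⟨k, rfl | rfl | rfl | rfl⟩ | rfl | rfl | rfl <;> fin_cases v
  · exact Or.inl ⟨k+1, Or.inr (Or.inl (m10 hb k))⟩
  · obtain _ | k := k
    · exact Or.inr (Or.inl (m110 hb))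
    · exact Or.inl ⟨k, Or.inr (Or.inl (m11 hb k))⟩
  · obtain _ | k := k
    · exact Or.inr (Or.inr (Or.inl (m200 hb)))
    · exact Or.inl ⟨k, Or.inl (m20 hb k)⟩
  · exact Or.inl ⟨k+1, Or.inl (m21 hb k)⟩
  · exact Or.inl ⟨k, Or.inr (Or.inr (Or.inr (m30 hb k)))⟩
  · exact Or.inl ⟨k+2, Or.inr (Or.inr (Or.inr (m31 hb k)))⟩
  · exact Or.inl ⟨k, Or.inr (Or.inr (Or.inl (m40 hb k)))⟩
  · obtain _ | _ | k := k
    · exact Or.inr (Or.inr (Or.inl (m410 hb)))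
    · exact Or.inr (Or.inr (Or.inr (m411 hb)))
    · exact Or.inl ⟨k, Or.inr (Or.inr (Or.inl (m41 hb k)))⟩
  · exact Or.inr (Or.inr (Or.inr (me00 hb)))
  · exact Or.inl ⟨0, Or.inl (me01 hb)⟩
  · exact Or.inl ⟨0, Or.inr (Or.inl (me10 hb))⟩
  · exact Or.inl ⟨0, Or.inr (Or.inr (Or.inr (me11 hb)))⟩
  · exact Or.inr (Or.inl (me20 hb))
  · exact Or.inl ⟨1, Or.inr (Or.inr (Or.inr (me21 hb)))⟩

lemma inv_init : Inv b (!![0, b; -b, 0], (1 : MM)) := by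
  refine Or.inl ⟨0, Or.inl ?_⟩
  rw [Prod.ext_iff]
  refine ⟨rfl, ?_⟩
  funext i j
  fin_cases i <;> fin_cases j <;> simp [st1, u, Matrix.one_apply]

lemma inv_foldl (hb : 2 ≤ b) (l : List (Fin 2)) (p : MM × MM) (h : Inv b p) :
    Inv b (l.foldl mutPair p) := by
  induction l generalizing p with
  | nil => exact h
  | cons v l ih => exact ih _ (inv_step hb p v h)

lemma vec_ne_zero {f : Fin 2 → ℤ} (i : Fin 2) (h : f i ≠ 0) : f ≠ 0 :=
  fun hf => h (by rw [hf]; rfl)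

lemma inv_coh (hb : 2 ≤ b) (p : MM × MM) (h : Inv b p) (j : Fin 2) :
    (fun i => p.2 i j) ≠ 0 ∧
      ((∀ i, 0 ≤ p.2 i j) ∨ (∀ i, p.2 i j ≤ 0)) := by
  have hnn : ∀ n, 0 ≤ u b (n+1) := u_nonneg hb
  have hpos : ∀ n, 1 ≤ u b (n+2) := u_pos hb
  rcases h with ⟨k, rfl | rfl | rfl | rfl⟩ | rfl | rfl | rfl <;> fin_cases j
  -- st1 col 0 : (u(k+2), u(k+1))
  · exact ⟨vec_ne_zero 0 (by simp [st1]; linarith [hpos k]),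
      Or.inl (fun i => by fin_cases i <;> simp [st1] <;> linarith [hnn k, hnn (k+1)])⟩
  -- st1 col 1 : (-u(k+1), -u k)
  · obtain _ | k := k
    · exact ⟨vec_ne_zero 1 (by simp [st1, u]),
        Or.inl (fun i => by fin_cases i <;> simp [st1, u])⟩
    · exact ⟨vec_ne_zero 0 (by simp [st1]; linarith [hpos k]),
        Or.inr (fun i => by fin_cases i <;> simp [st1] <;> linarith [hnn k, hnn (k+1)])⟩
  -- st2 col 0 : (-u(k+1), -u k)
  · obtain _ | k := k
    · exact ⟨vec_ne_zero 1 (by simp [st2, u]),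
        Or.inl (fun i => by fin_cases i <;> simp [st2, u])⟩
    · exact ⟨vec_ne_zero 0 (by simp [st2]; linarith [hpos k]),
        Or.inr (fun i => by fin_cases i <;> simp [st2] <;> linarith [hnn k, hnn (k+1)])⟩
  -- st2 col 1 : (u(k+2), u(k+1))
  · exact ⟨vec_ne_zero 0 (by simp [st2]; linarith [hpos k]),
      Or.inl (fun i => by fin_cases i <;> simp [st2] <;> linarith [hnn k, hnn (k+1)])⟩
  -- st3 col 0 : (u(k+1), u(k+2))
  · exact ⟨vec_ne_zero 1 (by simp [st3]; linarith [hpos k]),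
      Or.inl (fun i => by fin_cases i <;> simp [st3] <;> linarith [hnn k, hnn (k+1)])⟩
  -- st3 col 1 : (-u(k+2), -u(k+3))
  · exact ⟨vec_ne_zero 0 (by simp [st3]; linarith [hpos k]),
      Or.inr (fun i => by fin_cases i <;> simp [st3] <;> linarith [hnn (k+1), hnn (k+2)])⟩
  -- st4 col 0 : (-u(k+1), -u(k+2))
  · exact ⟨vec_ne_zero 1 (by simp [st4]; linarith [hpos k]),
      Or.inr (fun i => by fin_cases i <;> simp [st4] <;> linarith [hnn k, hnn (k+1)])⟩
  -- st4 col 1 : (u k, u(k+1))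
  · obtain _ | k := k
    · exact ⟨vec_ne_zero 0 (by simp [st4, u]),
        Or.inr (fun i => by fin_cases i <;> simp [st4, u])⟩
    · exact ⟨vec_ne_zero 1 (by simp [st4]; linarith [hpos k]),
        Or.inl (fun i => by fin_cases i <;> simp [st4] <;> linarith [hnn k, hnn (k+1)])⟩
  · exact ⟨vec_ne_zero 0 (by simp [e0]),
      Or.inl (fun i => by fin_cases i <;> simp [e0])⟩
  · exact ⟨vec_ne_zero 1 (by simp [e0]),
      Or.inr (fun i => by fin_cases i <;> simp [e0])⟩
  · exact ⟨vec_ne_zero 1 (by simp [e1]),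
      Or.inr (fun i => by fin_cases i <;> simp [e1])⟩
  · exact ⟨vec_ne_zero 0 (by simp [e1]),
      Or.inl (fun i => by fin_cases i <;> simp [e1])⟩
  · exact ⟨vec_ne_zero 0 (by simp [e2]),
      Or.inr (fun i => by fin_cases i <;> simp [e2])⟩
  · exact ⟨vec_ne_zero 1 (by simp [e2]),
      Or.inr (fun i => by fin_cases i <;> simp [e2])⟩

end SC
namespace SC

def L1 : List (MM × MM) :=
  [(!![0,-1;1,0], !![-1,0;-1,1]),
   (!![0,-1;1,0], !![-1,1;0,1]),
   (!![0,-1;1,0], !![0,-1;-1,0]),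
   (!![0,-1;1,0], !![0,1;1,0]),
   (!![0,-1;1,0], !![1,0;0,-1]),
   (!![0,1;-1,0], !![-1,0;0,-1]),
   (!![0,1;-1,0], !![0,-1;1,-1]),
   (!![0,1;-1,0], !![0,1;-1,0]),
   (!![0,1;-1,0], !![1,-1;1,0]),
   (!![0,1;-1,0], !![1,0;0,1])]

lemma L1_closed : ∀ p ∈ L1, ∀ v : Fin 2, mutPair p v ∈ L1 := by decide

lemma L1_init : ((!![0,1;-1,0], (1 : MM)) : MM × MM) ∈ L1 := by decide

lemma L1_foldl (l : List (Fin 2)) (p : MM × MM) (h : p ∈ L1) :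
    l.foldl mutPair p ∈ L1 := by
  induction l generalizing p with
  | nil => exact h
  | cons v l ih => exact ih _ (L1_closed p h v)

lemma L1_coh : ∀ p ∈ L1, ∀ j : Fin 2,
    (fun i => p.2 i j) ≠ 0 ∧ ((∀ i, 0 ≤ p.2 i j) ∨ (∀ i, p.2 i j ≤ 0)) := by decide

end SC

theorem rank_two_sign_coherence (b : ℕ) (hb : 1 ≤ b)
    (v : Fin 2 → ℤ) (hv : IsCVector !![0, (b : ℤ); -(b : ℤ), 0] v) :
    v ≠ 0 ∧ ((∀ i, 0 ≤ v i) ∨ (∀ i, v i ≤ 0)) := by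
  obtain ⟨l, j, rfl⟩ := hv
  rcases lt_or_ge b 2 with h1 | h2
  · have hb1 : b = 1 := by omega
    subst hb1
    have hmat : !![0, ((1:ℕ) : ℤ); -((1:ℕ) : ℤ), 0] = !![0,1;-1,0] := by norm_num
    rw [mutSeq, hmat]
    exact SC.L1_coh _ (SC.L1_foldl l _ SC.L1_init) j
  · have hb2 : 2 ≤ ((b:ℕ):ℤ) := by exact_mod_cast h2
    exact SC.inv_coh hb2 _ (SC.inv_foldl hb2 l _ SC.inv_init) j
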